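/- For every nonzero real t, the infinite product ∏_{m=1}^{∞} cos(t/2^m) converges to sin(t)/t. -/

import Mathlib

open Real Filter

lemma viete_key (t : ℝ) : ∀ M : ℕ,
    (∏ m ∈ Finset.Icc 1 M, Real.cos (t / 2 ^ m)) * (2 ^ M * Real.sin (t / 2 ^ M))
      = Real.sin t := by
  intro M
  induction M with
  | zero => simp
  | succ M ih =>
    rw [Finset.prod_Icc_succ_top (by omega)]
    have h2 : t / 2 ^ M = 2 * (t / 2 ^ (M + 1)) := by ring
    have := Real.sin_two_mul (t / 2 ^ (M + 1))
    rw [← ih, h2, this]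
    ring

lemma viete_denom (t : ℝ) (ht : t ≠ 0) :
    Tendsto (fun M : ℕ => (2 : ℝ) ^ M * Real.sin (t / 2 ^ M)) atTop (nhds t) := by
  have h0 : Tendsto (fun M : ℕ => t / 2 ^ M) atTop (nhds 0) := by
    have : Tendsto (fun M : ℕ => ((1:ℝ)/2) ^ M) atTop (nhds 0) :=
      tendsto_pow_atTop_nhds_zero_of_lt_one (by norm_num) (by norm_num)
    have := this.const_mul t
    simpa [div_eq_mul_inv, mul_comm, inv_pow] using this
  have h0' : Tendsto (fun M : ℕ => t / 2 ^ M) atTop (nhdsWithin 0 {0}ᶜ) := by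
    refine tendsto_nhdsWithin_iff.2 ⟨h0, Eventually.of_forall fun M => ?_⟩
    simp [div_eq_mul_inv, ht]
  have hslope : Tendsto (fun x : ℝ => Real.sin x / x) (nhdsWithin 0 {0}ᶜ) (nhds 1) := by
    have := (Real.hasDerivAt_sin 0)
    rw [hasDerivAt_iff_tendsto_slope] at this
    refine (this.congr fun x => ?_).mono_right (by simp)
    simp [slope_fun_def, Real.sin_zero, div_eq_inv_mul]
  have hcomp : Tendsto (fun M : ℕ => Real.sin (t / 2 ^ M) / (t / 2 ^ M)) atTop (nhds 1) :=
    hslope.comp h0'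
  have := hcomp.const_mul t
  rw [mul_one] at this
  refine this.congr fun M => ?_
  have h2 : (2 : ℝ) ^ M ≠ 0 := by positivity
  field_simp

theorem viete_sinc (t : ℝ) (ht : t ≠ 0) :
    Filter.Tendsto (fun M : ℕ => ∏ m ∈ Finset.Icc 1 M, Real.cos (t / 2 ^ m))
      Filter.atTop (nhds (Real.sin t / t)) := by
  have hd := viete_denom t ht
  have hne : ∀ᶠ M : ℕ in atTop, (2 : ℝ) ^ M * Real.sin (t / 2 ^ M) ≠ 0 := by
    have : {(0:ℝ)}ᶜ ∈ nhds t := isOpen_compl_singleton.mem_nhds (by simpa using ht)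
    filter_upwards [hd.eventually_mem this] with M hM using hM
  have hdiv : Tendsto (fun M : ℕ => Real.sin t / ((2:ℝ) ^ M * Real.sin (t / 2 ^ M)))
      atTop (nhds (Real.sin t / t)) := tendsto_const_nhds.div hd ht
  refine hdiv.congr' ?_
  filter_upwards [hne] with M hM
  rw [← viete_key t M]
  field_simp
  exact mul_div_cancel_right₀ _ (right_ne_zero_of_mul hM)
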